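/- Sufficient bound for the regularization parameter (Theorem 3.7): Assume uniform SOSC with constant γ > 0. Then for every δ ∈ (0, γ), the convexification recursion with parameter δ satisfies R̃_k(δ) ≻ 0 for all k = 0,…,N−1 and H̃_k(δ) ≻ 0 for all k = 0,…,N. -/

import Mathlib

open Matrix BigOperators Finset

/-- The Euclidean norm of a vector in `ℝ^n`. -/
noncomputable def evNorm {n : ℕ} (x : Fin n → ℝ) : ℝ :=
  ‖(EuclideanSpace.equiv (Fin n) ℝ).symm x‖

/-- Uniform SOSC with constant `γ`: the homogeneous quadratic objective dominates
`γ` times the squared Euclidean norm of the trajectory. -/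
def USOSC {nx nu : ℕ} (N : ℕ) (γ : ℝ)
    (A : ℕ → Matrix (Fin nx) (Fin nx) ℝ) (B : ℕ → Matrix (Fin nx) (Fin nu) ℝ)
    (Q : ℕ → Matrix (Fin nx) (Fin nx) ℝ) (R : ℕ → Matrix (Fin nu) (Fin nu) ℝ)
    (S : ℕ → Matrix (Fin nu) (Fin nx) ℝ) : Prop :=
  ∀ (p : ℕ → Fin nx → ℝ) (q : ℕ → Fin nu → ℝ),
    p 0 = 0 → (∀ k < N, p (k + 1) = A k *ᵥ p k + B k *ᵥ q k) →
    γ * ((∑ k ∈ range (N + 1), evNorm (p k) ^ 2) + ∑ k ∈ range N, evNorm (q k) ^ 2)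
      ≤ (∑ k ∈ range N,
          (p k ⬝ᵥ Q k *ᵥ p k + 2 * (q k ⬝ᵥ S k *ᵥ p k) + q k ⬝ᵥ R k *ᵥ q k))
        + p N ⬝ᵥ Q N *ᵥ p N

lemma evNorm_sq {n : ℕ} (x : Fin n → ℝ) : evNorm x ^ 2 = x ⬝ᵥ x := by
  rw [evNorm, EuclideanSpace.norm_eq, Real.sq_sqrt (by positivity)]
  simp [dotProduct, sq]

lemma tdp {m n : ℕ} (M : Matrix (Fin m) (Fin n) ℝ) (x : Fin m → ℝ) (y : Fin n → ℝ) :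
    Mᵀ *ᵥ x ⬝ᵥ y = x ⬝ᵥ M *ᵥ y := by
  rw [Matrix.mulVec_transpose, ← Matrix.dotProduct_mulVec]

lemma dp_symm {n : ℕ} {M : Matrix (Fin n) (Fin n) ℝ} (h : M.IsSymm) (x y : Fin n → ℝ) :
    x ⬝ᵥ M *ᵥ y = y ⬝ᵥ M *ᵥ x := by
  rw [← tdp M y x, h]
  exact dotProduct_comm _ _

lemma dp_sandwich {m n k : ℕ} (X : Matrix (Fin m) (Fin n) ℝ) (Z : Matrix (Fin m) (Fin m) ℝ)
    (Y : Matrix (Fin m) (Fin k) ℝ) (x : Fin n → ℝ) (y : Fin k → ℝ) :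
    x ⬝ᵥ (Xᵀ * Z * Y) *ᵥ y = (X *ᵥ x) ⬝ᵥ Z *ᵥ (Y *ᵥ y) := by
  rw [← Matrix.mulVec_mulVec, ← Matrix.mulVec_mulVec, ← tdp Xᵀ, Matrix.transpose_transpose]

lemma dp_self_nonneg {ι : Type*} [Fintype ι] (x : ι → ℝ) : 0 ≤ x ⬝ᵥ x :=
  Finset.sum_nonneg fun i _ => mul_self_nonneg _

lemma dp_self_pos {ι : Type*} [Fintype ι] {x : ι → ℝ} (hx : x ≠ 0) : 0 < x ⬝ᵥ x :=
  lt_of_le_of_ne (dp_self_nonneg x) fun h => hx (dotProduct_self_eq_zero.mp h.symm)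

lemma isSymm_to_herm {ι : Type*} [Fintype ι] {M : Matrix ι ι ℝ} (h : M.IsSymm) :
    M.IsHermitian := by
  rwa [Matrix.IsHermitian, Matrix.conjTranspose_eq_transpose_of_trivial]

lemma herm_to_isSymm {ι : Type*} [Fintype ι] {M : Matrix ι ι ℝ} (h : M.IsHermitian) :
    M.IsSymm := by
  rwa [Matrix.IsHermitian, Matrix.conjTranspose_eq_transpose_of_trivial] at h

lemma cos_expand {nx nu : ℕ} (Ak : Matrix (Fin nx) (Fin nx) ℝ) (Bk : Matrix (Fin nx) (Fin nu) ℝ)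
    (Qk : Matrix (Fin nx) (Fin nx) ℝ) (Rk : Matrix (Fin nu) (Fin nu) ℝ)
    (Sk : Matrix (Fin nu) (Fin nx) ℝ) (Qb : Matrix (Fin nx) (Fin nx) ℝ) (hQb : Qb.IsSymm)
    (z : Fin nx → ℝ) (u : Fin nu → ℝ) :
    z ⬝ᵥ Qk *ᵥ z + 2 * (u ⬝ᵥ Sk *ᵥ z) + u ⬝ᵥ Rk *ᵥ u
      + (Ak *ᵥ z + Bk *ᵥ u) ⬝ᵥ Qb *ᵥ (Ak *ᵥ z + Bk *ᵥ u)
    = z ⬝ᵥ (Qk + Akᵀ * Qb * Ak) *ᵥ z + 2 * (u ⬝ᵥ (Sk + Bkᵀ * Qb * Ak) *ᵥ z)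
      + u ⬝ᵥ (Rk + Bkᵀ * Qb * Bk) *ᵥ u := by
  simp only [Matrix.add_mulVec, Matrix.mulVec_add, dotProduct_add,
    add_dotProduct, dp_sandwich]
  linear_combination dp_symm hQb (Ak *ᵥ z) (Bk *ᵥ u)

lemma dp_stt {nu nx : ℕ} (St : Matrix (Fin nu) (Fin nx) ℝ) (z : Fin nx → ℝ) (v : Fin nu → ℝ) :
    z ⬝ᵥ Stᵀ *ᵥ v = v ⬝ᵥ St *ᵥ z := by
  rw [← tdp St v z]
  exact dotProduct_comm _ _

lemma ht_quad {nu nx : ℕ} {Rt : Matrix (Fin nu) (Fin nu) ℝ} (hsymm : Rt.IsSymm)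
    (hdet : IsUnit Rt.det) (St : Matrix (Fin nu) (Fin nx) ℝ) (δ : ℝ)
    (z : Fin nx → ℝ) (v : Fin nu → ℝ) :
    z ⬝ᵥ (Stᵀ * Rt⁻¹ * St + δ • (1 : Matrix (Fin nx) (Fin nx) ℝ)) *ᵥ z
      + z ⬝ᵥ Stᵀ *ᵥ v + v ⬝ᵥ St *ᵥ z + v ⬝ᵥ Rt *ᵥ v
    = δ * (z ⬝ᵥ z)
      + (v + Rt⁻¹ *ᵥ (St *ᵥ z)) ⬝ᵥ Rt *ᵥ (v + Rt⁻¹ *ᵥ (St *ᵥ z)) := by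
  set w := St *ᵥ z with hw
  have h1 : Rt *ᵥ (Rt⁻¹ *ᵥ w) = w := by
    rw [Matrix.mulVec_mulVec, Matrix.mul_nonsing_inv _ hdet, Matrix.one_mulVec]
  have h2 : (Rt⁻¹ *ᵥ w) ⬝ᵥ Rt *ᵥ v = v ⬝ᵥ w := by
    rw [dp_symm hsymm, h1]
  have h3 : (Rt⁻¹ *ᵥ w) ⬝ᵥ Rt *ᵥ (Rt⁻¹ *ᵥ w) = w ⬝ᵥ Rt⁻¹ *ᵥ w := by
    rw [h1]
    exact dotProduct_comm _ _
  have h4 : v ⬝ᵥ Rt *ᵥ (Rt⁻¹ *ᵥ w) = v ⬝ᵥ w := by rw [h1]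
  have h5 : z ⬝ᵥ (Stᵀ * Rt⁻¹ * St) *ᵥ z = w ⬝ᵥ Rt⁻¹ *ᵥ w := by
    rw [dp_sandwich, hw]
  simp only [Matrix.add_mulVec, Matrix.mulVec_add, dotProduct_add,
    add_dotProduct, Matrix.smul_mulVec, Matrix.one_mulVec,
    dotProduct_smul, smul_eq_mul, dp_stt]
  rw [h2, h3, h4, h5]
  ring

lemma opt_u {nu nx : ℕ} {Rt : Matrix (Fin nu) (Fin nu) ℝ} (hsymm : Rt.IsSymm)
    (hdet : IsUnit Rt.det) (St : Matrix (Fin nu) (Fin nx) ℝ) (z : Fin nx → ℝ) :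
    2 * ((-(Rt⁻¹ *ᵥ (St *ᵥ z))) ⬝ᵥ St *ᵥ z)
      + (-(Rt⁻¹ *ᵥ (St *ᵥ z))) ⬝ᵥ Rt *ᵥ (-(Rt⁻¹ *ᵥ (St *ᵥ z)))
      = - (z ⬝ᵥ (Stᵀ * Rt⁻¹ * St) *ᵥ z) := by
  have := ht_quad hsymm hdet St 0 z (-(Rt⁻¹ *ᵥ (St *ᵥ z)))
  simp only [neg_add_cancel, zero_smul, add_zero, zero_mul, zero_add,
    zero_dotProduct, dotProduct_zero, Matrix.mulVec_zero] at this
  rw [dp_stt] at this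
  linarith

/-- **Sufficient bound for the regularization parameter (Theorem 3.7).**  Under uniform
SOSC with constant `γ > 0`, for every `δ ∈ (0, γ)` the convexification recursion yields
`R̃_k(δ) ≻ 0` for all `k < N` and `H̃_k(δ) ≻ 0` for all `k ≤ N`. -/
theorem convexification_sufficient_delta
    (N nx nu : ℕ) (hN : 1 ≤ N) (hnx : 1 ≤ nx) (hnu : 1 ≤ nu)
    (γ δ : ℝ) (hγ : 0 < γ) (hδ0 : 0 < δ) (hδγ : δ < γ)
    (A : ℕ → Matrix (Fin nx) (Fin nx) ℝ) (B : ℕ → Matrix (Fin nx) (Fin nu) ℝ)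
    (Q : ℕ → Matrix (Fin nx) (Fin nx) ℝ) (R : ℕ → Matrix (Fin nu) (Fin nu) ℝ)
    (S : ℕ → Matrix (Fin nu) (Fin nx) ℝ)
    (hQsymm : ∀ k ≤ N, (Q k).IsSymm) (hRsymm : ∀ k < N, (R k).IsSymm)
    (husosc : USOSC N γ A B Q R S)
    (Qbar : ℕ → Matrix (Fin nx) (Fin nx) ℝ) (Rt : ℕ → Matrix (Fin nu) (Fin nu) ℝ)
    (St : ℕ → Matrix (Fin nu) (Fin nx) ℝ) (Qt : ℕ → Matrix (Fin nx) (Fin nx) ℝ)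
    (Ht : ℕ → Matrix (Fin nx ⊕ Fin nu) (Fin nx ⊕ Fin nu) ℝ)
    (hQbarN : Qbar N = Q N - δ • (1 : Matrix (Fin nx) (Fin nx) ℝ))
    (hRt : ∀ k < N, Rt k = R k + (B k)ᵀ * Qbar (k + 1) * B k)
    (hSt : ∀ k < N, St k = S k + (B k)ᵀ * Qbar (k + 1) * A k)
    (hQt : ∀ k < N, Qt k = (St k)ᵀ * (Rt k)⁻¹ * St k
      + δ • (1 : Matrix (Fin nx) (Fin nx) ℝ))
    (hQbar : ∀ k < N, Qbar k = Q k + (A k)ᵀ * Qbar (k + 1) * A k - Qt k)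
    (hHt : ∀ k < N, Ht k = Matrix.fromBlocks (Qt k) (St k)ᵀ (St k) (Rt k))
    (hHtN : Ht N = δ • (1 : Matrix (Fin nx ⊕ Fin nu) (Fin nx ⊕ Fin nu) ℝ)) :
    (∀ k < N, (Rt k).PosDef) ∧ (∀ k ≤ N, (Ht k).PosDef) := by
  -- main backward induction
  have key : ∀ d k, k + d = N →
      (Qbar k).IsSymm ∧ (∀ j, k ≤ j → j < N → (Rt j).PosDef) ∧
      ∀ z : Fin nx → ℝ, ∃ p : ℕ → Fin nx → ℝ, ∃ q : ℕ → Fin nu → ℝ,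
        p k = z ∧ (∀ j, k ≤ j → j < N → p (j + 1) = A j *ᵥ p j + B j *ᵥ q j) ∧
        (∑ j ∈ Ico k N,
            (p j ⬝ᵥ Q j *ᵥ p j + 2 * (q j ⬝ᵥ S j *ᵥ p j) + q j ⬝ᵥ R j *ᵥ q j))
          + p N ⬝ᵥ Q N *ᵥ p N
          = z ⬝ᵥ Qbar k *ᵥ z + δ * ∑ j ∈ Ico k (N + 1), p j ⬝ᵥ p j := by
    intro d
    induction d with
    | zero =>
      intro k hk
      obtain rfl : k = N := by omega
      refine ⟨?_, ?_, ?_⟩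
      · rw [Matrix.IsSymm, hQbarN]
        simp [Matrix.transpose_sub, Matrix.transpose_smul, (hQsymm k le_rfl).eq]
      · intro j hj hj'; omega
      · intro z
        refine ⟨fun _ => z, fun _ => 0, rfl, fun j hj hj' => by omega, ?_⟩
        rw [Finset.Ico_self, Finset.sum_empty, zero_add, hQbarN]
        rw [show Ico k (k + 1) = {k} from Nat.Ico_succ_singleton k]
        rw [Finset.sum_singleton, Matrix.sub_mulVec, dotProduct_sub,
          Matrix.smul_mulVec, Matrix.one_mulVec, dotProduct_smul, smul_eq_mul]
        ring
    | succ d ih =>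
      intro k hk
      have hkN : k < N := by omega
      obtain ⟨hsym1, hRtail, hopt⟩ := ih (k + 1) (by omega)
      -- symmetry of Rt k
      have hRtS : (Rt k).IsSymm := by
        rw [Matrix.IsSymm, hRt k hkN]
        simp [Matrix.transpose_add, Matrix.transpose_mul, Matrix.transpose_transpose,
          Matrix.mul_assoc, hsym1.eq, (hRsymm k hkN).eq]
      -- Rt k posdef
      have hRtPD : (Rt k).PosDef := by
        refine Matrix.posDef_iff_dotProduct_mulVec.mpr ⟨isSymm_to_herm hRtS, fun v hv => ?_⟩
        obtain ⟨p', q', hp'k, hdyn', hcost'⟩ := hopt (B k *ᵥ v)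
        set p : ℕ → Fin nx → ℝ := fun j => if j ≤ k then 0 else p' j with hp
        set q : ℕ → Fin nu → ℝ :=
          fun j => if j < k then 0 else if j = k then v else q' j with hq
        have hpLe : ∀ j, j ≤ k → p j = 0 := by
          intro j hj; simp only [hp]; rw [if_pos hj]
        have hpGt : ∀ j, k < j → p j = p' j := by
          intro j hj; simp only [hp]; rw [if_neg (by omega)]
        have hqLt : ∀ j, j < k → q j = 0 := by
          intro j hj; simp only [hq]; rw [if_pos hj]
        have hqk : q k = v := by simp [hq]
        have hqGt : ∀ j, k < j → q j = q' j := by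
          intro j hj; simp only [hq]; rw [if_neg (by omega), if_neg (by omega)]
        have hdyn : ∀ j < N, p (j + 1) = A j *ᵥ p j + B j *ᵥ q j := by
          intro j hj
          rcases lt_trichotomy j k with h | h | h
          · rw [hpLe (j + 1) (by omega), hpLe j h.le, hqLt j h]; simp
          · subst h
            rw [hpGt (j + 1) (by omega), hpLe j le_rfl, hqk, hp'k]; simp
          · rw [hpGt (j + 1) (by omega), hpGt j h, hqGt j h]
            exact hdyn' j (by omega) hj
        have hineq := husosc p q (hpLe 0 (Nat.zero_le k)) hdyn
        simp only [evNorm_sq] at hineq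
        -- p-norm sum
        have hA1 : ∑ j ∈ range (N + 1), p j ⬝ᵥ p j
            = ∑ j ∈ Ico (k + 1) (N + 1), p' j ⬝ᵥ p' j := by
          rw [← Finset.sum_range_add_sum_Ico _ (by omega : k + 1 ≤ N + 1)]
          have h0 : ∑ j ∈ range (k + 1), p j ⬝ᵥ p j = 0 := by
            apply Finset.sum_eq_zero
            intro j hj
            rw [hpLe j (Nat.le_of_lt_succ (Finset.mem_range.mp hj))]
            simp
          rw [h0, zero_add]
          refine Finset.sum_congr rfl fun j hj => ?_
          have hj' := Finset.mem_Ico.mp hj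
          rw [hpGt j (by omega)]
        -- q-norm sum
        have hA2 : ∑ j ∈ range N, q j ⬝ᵥ q j
            = v ⬝ᵥ v + ∑ j ∈ Ico (k + 1) N, q' j ⬝ᵥ q' j := by
          rw [← Finset.sum_range_add_sum_Ico _ hkN.le]
          have h0 : ∑ j ∈ range k, q j ⬝ᵥ q j = 0 := by
            apply Finset.sum_eq_zero
            intro j hj
            rw [hqLt j (Finset.mem_range.mp hj)]
            simp
          rw [h0, zero_add, Finset.sum_eq_sum_Ico_succ_bot hkN, hqk]
          congr 1
          refine Finset.sum_congr rfl fun j hj => ?_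
          have hj' := Finset.mem_Ico.mp hj
          rw [hqGt j (by omega)]
        -- cost sum
        have hA3 : (∑ j ∈ range N,
              (p j ⬝ᵥ Q j *ᵥ p j + 2 * (q j ⬝ᵥ S j *ᵥ p j) + q j ⬝ᵥ R j *ᵥ q j))
            + p N ⬝ᵥ Q N *ᵥ p N
            = v ⬝ᵥ R k *ᵥ v + ((∑ j ∈ Ico (k + 1) N,
              (p' j ⬝ᵥ Q j *ᵥ p' j + 2 * (q' j ⬝ᵥ S j *ᵥ p' j) + q' j ⬝ᵥ R j *ᵥ q' j))
              + p' N ⬝ᵥ Q N *ᵥ p' N) := by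
          rw [← Finset.sum_range_add_sum_Ico _ hkN.le]
          have h0 : ∑ j ∈ range k,
              (p j ⬝ᵥ Q j *ᵥ p j + 2 * (q j ⬝ᵥ S j *ᵥ p j) + q j ⬝ᵥ R j *ᵥ q j) = 0 := by
            apply Finset.sum_eq_zero
            intro j hj
            have hj' := Finset.mem_range.mp hj
            rw [hpLe j hj'.le, hqLt j hj']
            simp
          rw [h0, zero_add, Finset.sum_eq_sum_Ico_succ_bot hkN, hqk, hpLe k le_rfl,
            hpGt N hkN]
          have hcongr : ∑ j ∈ Ico (k + 1) N,
              (p j ⬝ᵥ Q j *ᵥ p j + 2 * (q j ⬝ᵥ S j *ᵥ p j) + q j ⬝ᵥ R j *ᵥ q j)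
              = ∑ j ∈ Ico (k + 1) N,
              (p' j ⬝ᵥ Q j *ᵥ p' j + 2 * (q' j ⬝ᵥ S j *ᵥ p' j) + q' j ⬝ᵥ R j *ᵥ q' j) := by
            refine Finset.sum_congr rfl fun j hj => ?_
            have hj' := Finset.mem_Ico.mp hj
            rw [hpGt j (by omega), hqGt j (by omega)]
          rw [hcongr]
          simp
          ring
        rw [hA1, hA2, hA3, hcost'] at hineq
        -- translate into Rt k
        have hRtv : v ⬝ᵥ Rt k *ᵥ v
            = v ⬝ᵥ R k *ᵥ v + (B k *ᵥ v) ⬝ᵥ Qbar (k + 1) *ᵥ (B k *ᵥ v) := by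
          rw [hRt k hkN, Matrix.add_mulVec, dotProduct_add, dp_sandwich]
        have hstar : star v = v := rfl
        rw [hstar, hRtv]
        set P := ∑ j ∈ Ico (k + 1) (N + 1), p' j ⬝ᵥ p' j with hP'
        set Qs := ∑ j ∈ Ico (k + 1) N, q' j ⬝ᵥ q' j with hQs'
        have hP : 0 ≤ P := Finset.sum_nonneg fun j _ => dp_self_nonneg _
        have hQs : 0 ≤ Qs := Finset.sum_nonneg fun j _ => dp_self_nonneg _
        have hvv : 0 < v ⬝ᵥ v := dp_self_pos hv
        have hexp : γ * (P + (v ⬝ᵥ v + Qs)) = γ * P + γ * (v ⬝ᵥ v) + γ * Qs := by ring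
        have hgd : (γ - δ) * P = γ * P - δ * P := by ring
        rw [hexp] at hineq
        linarith [mul_pos hγ hvv, mul_nonneg hγ.le hQs,
          mul_nonneg (sub_nonneg.mpr hδγ.le) hP, hgd]
      have hdet : IsUnit (Rt k).det := hRtPD.det_pos.ne'.isUnit
      have hRtinvS : ((Rt k)⁻¹).IsSymm := by
        rw [Matrix.IsSymm, Matrix.transpose_nonsing_inv, hRtS.eq]
      -- symmetry of Qbar k
      have hsym0 : (Qbar k).IsSymm := by
        rw [Matrix.IsSymm, hQbar k hkN, hQt k hkN]
        simp [Matrix.transpose_sub, Matrix.transpose_add, Matrix.transpose_mul,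
          Matrix.transpose_transpose, Matrix.transpose_smul, Matrix.transpose_one,
          Matrix.transpose_nonsing_inv, Matrix.mul_assoc,
          hsym1.eq, hRtS.eq, (hQsymm k hkN.le).eq]
      refine ⟨hsym0, ?_, ?_⟩
      · intro j hj hj'
        rcases eq_or_lt_of_le hj with h | h
        · rwa [← h]
        · exact hRtail j h hj'
      -- optimal trajectory from stage k
      · intro z
        set u : Fin nu → ℝ := -((Rt k)⁻¹ *ᵥ (St k *ᵥ z)) with hu
        obtain ⟨p', q', hp'k, hdyn', hcost'⟩ := hopt (A k *ᵥ z + B k *ᵥ u)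
        set p : ℕ → Fin nx → ℝ := fun j => if j ≤ k then z else p' j with hp
        set q : ℕ → Fin nu → ℝ := fun j => if j ≤ k then u else q' j with hq
        have hpLe : ∀ j, j ≤ k → p j = z := by
          intro j hj; simp only [hp]; rw [if_pos hj]
        have hpGt : ∀ j, k < j → p j = p' j := by
          intro j hj; simp only [hp]; rw [if_neg (by omega)]
        have hqLe : ∀ j, j ≤ k → q j = u := by
          intro j hj; simp only [hq]; rw [if_pos hj]
        have hqGt : ∀ j, k < j → q j = q' j := by
          intro j hj; simp only [hq]; rw [if_neg (by omega)]
        refine ⟨p, q, hpLe k le_rfl, ?_, ?_⟩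
        · intro j hj hj'
          rcases eq_or_lt_of_le hj with h | h
          · rw [← h] at hj' ⊢
            rw [hpGt (k + 1) (by omega), hpLe k le_rfl, hqLe k le_rfl, hp'k]
          · rw [hpGt (j + 1) (by omega), hpGt j h, hqGt j h]
            exact hdyn' j (by omega) hj'
        · -- cost identity
          have hsplit : ∑ j ∈ Ico k N,
              (p j ⬝ᵥ Q j *ᵥ p j + 2 * (q j ⬝ᵥ S j *ᵥ p j) + q j ⬝ᵥ R j *ᵥ q j)
              = (z ⬝ᵥ Q k *ᵥ z + 2 * (u ⬝ᵥ S k *ᵥ z) + u ⬝ᵥ R k *ᵥ u)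
                + ∑ j ∈ Ico (k + 1) N,
              (p' j ⬝ᵥ Q j *ᵥ p' j + 2 * (q' j ⬝ᵥ S j *ᵥ p' j) + q' j ⬝ᵥ R j *ᵥ q' j) := by
            rw [Finset.sum_eq_sum_Ico_succ_bot hkN, hpLe k le_rfl, hqLe k le_rfl]
            congr 1
            refine Finset.sum_congr rfl fun j hj => ?_
            have hj' := Finset.mem_Ico.mp hj
            rw [hpGt j (by omega), hqGt j (by omega)]
          have hsplit2 : ∑ j ∈ Ico k (N + 1), p j ⬝ᵥ p j
              = z ⬝ᵥ z + ∑ j ∈ Ico (k + 1) (N + 1), p' j ⬝ᵥ p' j := by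
            rw [Finset.sum_eq_sum_Ico_succ_bot (by omega : k < N + 1), hpLe k le_rfl]
            congr 1
            refine Finset.sum_congr rfl fun j hj => ?_
            have hj' := Finset.mem_Ico.mp hj
            rw [hpGt j (by omega)]
          rw [hsplit, hsplit2, hpGt N hkN]
          -- completion of squares at stage k
          have hcos := cos_expand (A k) (B k) (Q k) (R k) (S k) (Qbar (k + 1)) hsym1 z u
          rw [← hSt k hkN, ← hRt k hkN] at hcos
          have hopt_u := opt_u hRtS hdet (St k) z
          rw [← hu] at hopt_u
          -- Qbar k quadratic form
          have hQbk : z ⬝ᵥ Qbar k *ᵥ z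
              = z ⬝ᵥ (Q k + (A k)ᵀ * Qbar (k + 1) * A k) *ᵥ z
                - z ⬝ᵥ ((St k)ᵀ * (Rt k)⁻¹ * St k) *ᵥ z - δ * (z ⬝ᵥ z) := by
            rw [hQbar k hkN, hQt k hkN, Matrix.sub_mulVec, dotProduct_sub,
              Matrix.add_mulVec (((St k)ᵀ * (Rt k)⁻¹ * St k)), dotProduct_add,
              Matrix.smul_mulVec, Matrix.one_mulVec, dotProduct_smul,
              smul_eq_mul]
            ring
          linarith [hcost', hcos, hopt_u, hQbk]
  -- conclude
  have keyAll := key N 0 (by omega)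
  constructor
  · intro k hk
    exact keyAll.2.1 k (Nat.zero_le k) hk
  · intro k hk
    rcases eq_or_lt_of_le hk with h | h
    · subst h
      rw [hHtN]
      refine Matrix.posDef_iff_dotProduct_mulVec.mpr ⟨isSymm_to_herm ?_, fun x hx => ?_⟩
      · rw [Matrix.IsSymm, Matrix.transpose_smul, Matrix.transpose_one]
      · have hstar : star x = x := rfl
        rw [hstar]
        have : x ⬝ᵥ (δ • (1 : Matrix (Fin nx ⊕ Fin nu) (Fin nx ⊕ Fin nu) ℝ)) *ᵥ x
            = δ * (x ⬝ᵥ x) := by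
          rw [Matrix.smul_mulVec, Matrix.one_mulVec, dotProduct_smul,
            smul_eq_mul]
        rw [this]
        exact mul_pos hδ0 (dp_self_pos hx)
    · -- k < N
      have hRtPD : (Rt k).PosDef := keyAll.2.1 k (Nat.zero_le k) h
      have hRtS : (Rt k).IsSymm := herm_to_isSymm hRtPD.1
      have hdet : IsUnit (Rt k).det := hRtPD.det_pos.ne'.isUnit
      have hQtS : (Qt k).IsSymm := by
        rw [Matrix.IsSymm, hQt k h]
        simp [Matrix.transpose_add, Matrix.transpose_mul, Matrix.transpose_transpose,
          Matrix.transpose_smul, Matrix.transpose_one, Matrix.transpose_nonsing_inv,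
          Matrix.mul_assoc, hRtS.eq]
      rw [hHt k h]
      refine Matrix.posDef_iff_dotProduct_mulVec.mpr ⟨isSymm_to_herm ?_, fun x hx => ?_⟩
      · rw [Matrix.IsSymm, Matrix.fromBlocks_transpose, hQtS.eq, hRtS.eq,
          Matrix.transpose_transpose]
      · set z : Fin nx → ℝ := x ∘ Sum.inl with hz
        set v : Fin nu → ℝ := x ∘ Sum.inr with hv
        have hxe : x = Sum.elim z v := by
          funext i; cases i <;> rfl
        have hstar : star x = x := rfl
        have hdot : star x ⬝ᵥ Matrix.fromBlocks (Qt k) (St k)ᵀ (St k) (Rt k) *ᵥ x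
            = z ⬝ᵥ Qt k *ᵥ z + z ⬝ᵥ (St k)ᵀ *ᵥ v + (v ⬝ᵥ St k *ᵥ z + v ⬝ᵥ Rt k *ᵥ v) := by
          rw [hstar]
          conv_lhs => rw [hxe]
          rw [Matrix.fromBlocks_mulVec, sumElim_dotProduct_sumElim,
            dotProduct_add, dotProduct_add]
          simp only [Sum.elim_comp_inl, Sum.elim_comp_inr]
        rw [hdot, hQt k h]
        have hquad := ht_quad hRtS hdet (St k) δ z v
        have hsqnn : 0 ≤ (v + (Rt k)⁻¹ *ᵥ (St k *ᵥ z)) ⬝ᵥ Rt k *ᵥ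
            (v + (Rt k)⁻¹ *ᵥ (St k *ᵥ z)) := by
          by_cases hw : v + (Rt k)⁻¹ *ᵥ (St k *ᵥ z) = 0
          · rw [hw]; simp
          · have hpos := (Matrix.posDef_iff_dotProduct_mulVec.mp hRtPD).2 hw
            have hst : star (v + (Rt k)⁻¹ *ᵥ (St k *ᵥ z)) = v + (Rt k)⁻¹ *ᵥ (St k *ᵥ z) := rfl
            rw [hst] at hpos
            exact hpos.le
        by_cases hz0 : z = 0
        · have hv0 : v ≠ 0 := by
            intro hv0
            apply hx
            rw [hxe, hz0, hv0]
            funext i; cases i <;> rfl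
          have hpos := (Matrix.posDef_iff_dotProduct_mulVec.mp hRtPD).2 hv0
          have hstv : star v = v := rfl
          rw [hstv] at hpos
          have hzz : z ⬝ᵥ z = 0 := by rw [hz0]; simp
          have hdz : z ⬝ᵥ ((St k)ᵀ * (Rt k)⁻¹ * St k + δ • 1) *ᵥ z = 0 := by
            rw [hz0]; simp
          have hds : z ⬝ᵥ (St k)ᵀ *ᵥ v = 0 := by rw [hz0]; simp
          have hsz : v ⬝ᵥ St k *ᵥ z = 0 := by rw [hz0]; simp
          rw [hdz, hds, hsz]
          simpa using hpos
        · have hzz : 0 < z ⬝ᵥ z := dp_self_pos hz0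
          have hd := mul_pos hδ0 hzz
          linarith
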